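/- arXiv:1702.01588 — 3 statements merged into one kernel-verified Lean document; each statement's English description precedes it below -/
import Mathlib

section
/- Let S and T be Cu-semigroups. There is a natural bijection between the set of Cu-morphisms S → T and the set of compact elements of the bivariant Cu-semigroup [[S,T]] := τ([S,T], ≺): each Cu-morphism φ corresponds to the class of the constant path with value φ, and this class is compact; conversely every compact element of [[S,T]] arises this way. -/
/-- The rationals in the open interval `(0,1)`, used as index set for paths. -/
abbrev Iq : Type := {q : ℚ // 0 < q ∧ q < 1}

lemma Iq.exists_gt (l : Iq) : ∃ m : Iq, l.1 < m.1 := by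
  obtain ⟨h0, h1⟩ := l.2
  exact ⟨⟨(l.1 + 1) / 2, by constructor <;> linarith⟩, by show l.1 < (l.1 + 1) / 2; linarith⟩

/-- The sequential way-below (compact containment) relation in a preordered set. -/
def CuWayBelow {S : Type*} [Preorder S] (x y : S) : Prop :=
  ∀ z : ℕ → S, Monotone z → ∀ s : S, IsLUB (Set.range z) s → y ≤ s → ∃ k, x ≤ z k

/-- A `P`-semigroup: a commutative monoid with an additive transitive relation. -/
structure PSgp (M : Type*) [AddCommMonoid M] where
  prec : M → M → Prop
  trans : ∀ ⦃a b c : M⦄, prec a b → prec b c → prec a c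
  zero_prec : ∀ a : M, prec 0 a
  add_prec : ∀ ⦃a b c d : M⦄, prec a b → prec c d → prec (a + c) (b + d)

namespace PSgp

variable {M : Type*} [AddCommMonoid M]

/-- A path in a `P`-semigroup, indexed by the rationals in `(0,1)`. -/
def IsPath (P : PSgp M) (f : Iq → M) : Prop :=
  ∀ ⦃l m : Iq⦄, l.1 < m.1 → P.prec (f l) (f m)

/-- The type of paths in a `P`-semigroup. -/
def Path (P : PSgp M) : Type _ := {f : Iq → M // P.IsPath f}

variable {P : PSgp M}

instance : Add P.Path :=
  ⟨fun f g => ⟨fun l => f.1 l + g.1 l, fun _ _ h => P.add_prec (f.2 h) (g.2 h)⟩⟩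

instance : Zero P.Path := ⟨⟨fun _ => 0, fun _ _ _ => P.zero_prec 0⟩⟩

lemma path_add_apply (f g : P.Path) (l : Iq) : (f + g).1 l = f.1 l + g.1 l := rfl

/-- The pre-order relation between paths. -/
def pLe (f g : P.Path) : Prop := ∀ l : Iq, ∃ m : Iq, P.prec (f.1 l) (g.1 m)

lemma pLe_refl (f : P.Path) : pLe f f := fun l => by
  obtain ⟨m, hm⟩ := Iq.exists_gt l
  exact ⟨m, f.2 hm⟩

lemma pLe_trans {f g h : P.Path} (h1 : pLe f g) (h2 : pLe g h) : pLe f h := fun l => by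
  obtain ⟨m, hm⟩ := h1 l
  obtain ⟨m', hm'⟩ := h2 m
  exact ⟨m', P.trans hm hm'⟩

lemma pLe_add {f g f' g' : P.Path} (h1 : pLe f f') (h2 : pLe g g') : pLe (f + g) (f' + g') := by
  intro l
  obtain ⟨m1, hm1⟩ := h1 l
  obtain ⟨m2, hm2⟩ := h2 l
  have hmem : 0 < max m1.1 m2.1 ∧ max m1.1 m2.1 < 1 :=
    ⟨lt_max_of_lt_left m1.2.1, max_lt m1.2.2 m2.2.2⟩
  obtain ⟨μ, hμ⟩ := Iq.exists_gt ⟨max m1.1 m2.1, hmem⟩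
  have e1 : m1.1 < μ.1 := lt_of_le_of_lt (le_max_left _ _) hμ
  have e2 : m2.1 < μ.1 := lt_of_le_of_lt (le_max_right _ _) hμ
  exact ⟨μ, P.add_prec (P.trans hm1 (f'.2 e1)) (P.trans hm2 (g'.2 e2))⟩

instance pathSetoid (P : PSgp M) : Setoid P.Path where
  r f g := pLe f g ∧ pLe g f
  iseqv := ⟨fun f => ⟨pLe_refl f, pLe_refl f⟩, fun h => ⟨h.2, h.1⟩,
    fun h1 h2 => ⟨pLe_trans h1.1 h2.1, pLe_trans h2.2 h1.2⟩⟩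

/-- The path construction `τ(S)`: equivalence classes of paths. -/
abbrev Tau (P : PSgp M) : Type _ := Quotient (pathSetoid P)

def addT : Tau P → Tau P → Tau P :=
  Quotient.map₂ (· + ·) fun _ _ hf _ _ hg => ⟨pLe_add hf.1 hg.1, pLe_add hf.2 hg.2⟩

lemma addT_mk (f g : P.Path) : addT ⟦f⟧ ⟦g⟧ = ⟦f + g⟧ := rfl

lemma path_add_assoc (f g h : P.Path) : f + g + h = f + (g + h) :=
  Subtype.ext (funext fun _ => add_assoc _ _ _)

lemma path_add_comm (f g : P.Path) : f + g = g + f :=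
  Subtype.ext (funext fun _ => add_comm _ _)

lemma path_zero_add (f : P.Path) : 0 + f = f :=
  Subtype.ext (funext fun _ => zero_add _)

lemma path_add_zero (f : P.Path) : f + 0 = f :=
  Subtype.ext (funext fun _ => add_zero _)

instance : Zero (Tau P) := ⟨⟦(0 : P.Path)⟧⟩
instance : Add (Tau P) := ⟨addT⟩

instance : AddCommMonoid (Tau P) where
  add := addT
  zero := ⟦(0 : P.Path)⟧
  add_assoc a b c := Quotient.inductionOn₃ a b c fun f g h => by
    show addT (addT ⟦f⟧ ⟦g⟧) ⟦h⟧ = addT ⟦f⟧ (addT ⟦g⟧ ⟦h⟧)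
    rw [addT_mk, addT_mk, addT_mk, addT_mk, path_add_assoc]
  zero_add a := Quotient.inductionOn a fun f => by
    show addT ⟦(0 : P.Path)⟧ ⟦f⟧ = ⟦f⟧
    rw [addT_mk, path_zero_add]
  add_zero a := Quotient.inductionOn a fun f => by
    show addT ⟦f⟧ ⟦(0 : P.Path)⟧ = ⟦f⟧
    rw [addT_mk, path_add_zero]
  add_comm a b := Quotient.inductionOn₂ a b fun f g => by
    show addT ⟦f⟧ ⟦g⟧ = addT ⟦g⟧ ⟦f⟧
    rw [addT_mk, addT_mk, path_add_comm]
  nsmul := nsmulRec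
  nsmul_zero := fun _ => rfl
  nsmul_succ := fun _ _ => rfl

def leT : Tau P → Tau P → Prop :=
  Quotient.lift₂ pLe fun _ _ _ _ hf hg => propext
    ⟨fun h => pLe_trans hf.2 (pLe_trans h hg.1), fun h => pLe_trans hf.1 (pLe_trans h hg.2)⟩

instance : PartialOrder (Tau P) where
  le := leT
  le_refl a := Quotient.inductionOn a pLe_refl
  le_trans a b c := Quotient.inductionOn₃ a b c fun _ _ _ h1 h2 => pLe_trans h1 h2
  le_antisymm a b := Quotient.inductionOn₂ a b fun _ _ h1 h2 => Quotient.sound ⟨h1, h2⟩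

lemma leT_mk (f g : P.Path) : (⟦f⟧ : Tau P) ≤ ⟦g⟧ ↔ pLe f g := Iff.rfl

end PSgp

/-- An abstract Cuntz semigroup: a positively ordered monoid satisfying (O1)-(O4). -/
class IsCuSgp (S : Type*) [AddCommMonoid S] [PartialOrder S] : Prop where
  zero_le : ∀ a : S, 0 ≤ a
  add_mono : ∀ ⦃a b c d : S⦄, a ≤ b → c ≤ d → a + c ≤ b + d
  O1 : ∀ z : ℕ → S, Monotone z → ∃ s, IsLUB (Set.range z) s
  O2 : ∀ a : S, ∃ z : ℕ → S, (∀ n, CuWayBelow (z n) (z (n + 1))) ∧ IsLUB (Set.range z) a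
  O3 : ∀ ⦃a' a b' b : S⦄, CuWayBelow a' a → CuWayBelow b' b → CuWayBelow (a' + b') (a + b)
  O4 : ∀ z w : ℕ → S, Monotone z → Monotone w → ∀ s t : S, IsLUB (Set.range z) s →
    IsLUB (Set.range w) t → IsLUB (Set.range fun n => z n + w n) (s + t)


variable {S T : Type*} [AddCommMonoid S] [PartialOrder S] [AddCommMonoid T] [PartialOrder T]

/-- Generalized Cu-morphism: preserves addition, order, zero and suprema of
increasing sequences. -/
def IsGenCuMor (φ : S → T) : Prop :=
  φ 0 = 0 ∧ (∀ a b : S, φ (a + b) = φ a + φ b) ∧ Monotone φ ∧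
    ∀ z : ℕ → S, Monotone z → ∀ s : S, IsLUB (Set.range z) s →
      IsLUB (Set.range (φ ∘ z)) (φ s)

/-- The type of generalized Cu-morphisms from `S` to `T`. -/
def GenCuMor (S T : Type*) [AddCommMonoid S] [PartialOrder S] [AddCommMonoid T]
    [PartialOrder T] : Type _ := {φ : S → T // IsGenCuMor φ}

instance [IsCuSgp T] : Add (GenCuMor S T) :=
  ⟨fun f g => ⟨fun a => f.1 a + g.1 a, by
    obtain ⟨f0, fadd, fmono, flub⟩ := f.2
    obtain ⟨g0, gadd, gmono, glub⟩ := g.2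
    refine ⟨by dsimp only; rw [f0, g0, add_zero],
      fun a b => by dsimp only; rw [fadd, gadd, add_add_add_comm],
      fun a b hab => IsCuSgp.add_mono (fmono hab) (gmono hab), fun z hz s hs => ?_⟩
    exact IsCuSgp.O4 (f.1 ∘ z) (g.1 ∘ z) (fmono.comp hz) (gmono.comp hz) _ _
      (flub z hz s hs) (glub z hz s hs)⟩⟩

instance [IsCuSgp T] : Zero (GenCuMor S T) :=
  ⟨⟨fun _ => 0, rfl, fun _ _ => (add_zero 0).symm, fun _ _ _ => le_rfl,
    fun z _ s _ => ⟨by rintro x ⟨n, rfl⟩; exact le_rfl, fun b hb => hb ⟨0, rfl⟩⟩⟩⟩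

instance [IsCuSgp T] : AddCommMonoid (GenCuMor S T) where
  add := (· + ·)
  zero := 0
  add_assoc f g h := Subtype.ext (funext fun a => add_assoc _ _ _)
  zero_add f := Subtype.ext (funext fun a => zero_add _)
  add_zero f := Subtype.ext (funext fun a => add_zero _)
  add_comm f g := Subtype.ext (funext fun a => add_comm _ _)
  nsmul := nsmulRec
  nsmul_zero := fun _ => rfl
  nsmul_succ := fun _ _ => rfl

/-- The auxiliary relation on generalized Cu-morphisms. -/
def precCu (φ ψ : GenCuMor S T) : Prop :=
  ∀ a' a : S, CuWayBelow a' a → CuWayBelow (φ.1 a') (ψ.1 a)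


namespace Stmt15Aux

/-- The partition points `1 - 1/(k+1)` of `[0,1)`. -/
def aseq (k : ℕ) : ℚ := 1 - 1/(k+1)

lemma aseq_strictMono : StrictMono aseq := by
  intro k m hkm
  unfold aseq
  have h1 : (0:ℚ) < (k:ℚ)+1 := by positivity
  have h2 : (k:ℚ)+1 < (m:ℚ)+1 := by
    have : (k:ℚ) < m := by exact_mod_cast hkm
    linarith
  have := one_div_lt_one_div_of_lt h1 h2
  linarith

lemma aseq_lt_one (k : ℕ) : aseq k < 1 := by
  unfold aseq
  have : (0:ℚ) < 1/((k:ℚ)+1) := by positivity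
  linarith

lemma aseq_succ_pos (k : ℕ) : 0 < aseq (k+1) := by
  unfold aseq
  have h1 : ((k:ℚ)+1+1) ≥ 2 := by
    have : (0:ℚ) ≤ k := Nat.cast_nonneg k
    linarith
  have h2 : 1/((k:ℚ)+1+1) ≤ 1/2 := by
    apply one_div_le_one_div_of_le <;> linarith
  push_cast
  linarith

/-- The index of the interval `[aseq k, aseq (k+1))` containing `l`. -/
def kf (l : Iq) : ℕ := (⌊1/(1 - l.1)⌋ - 1).toNat

lemma kf_spec (l : Iq) : aseq (kf l) ≤ l.1 ∧ l.1 < aseq (kf l + 1) := by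
  obtain ⟨h0, h1⟩ := l.2
  have hpos : 0 < 1 - l.1 := by linarith
  set u : ℚ := 1/(1 - l.1) with hu
  have hu1 : 1 < u := by rw [hu, lt_div_iff₀ hpos]; linarith
  have hfl : 1 ≤ ⌊u⌋ := by
    rw [Int.le_floor]; exact_mod_cast hu1.le
  have hk : (kf l : ℤ) = ⌊u⌋ - 1 := by
    unfold kf; rw [← hu]; exact Int.toNat_of_nonneg (by omega)
  have hkq : (kf l : ℚ) = (⌊u⌋ : ℚ) - 1 := by exact_mod_cast hk
  have hn0 : (0:ℚ) < (⌊u⌋:ℚ) := by exact_mod_cast hfl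
  have hle : (⌊u⌋:ℚ) ≤ u := Int.floor_le u
  have hlt : u < (⌊u⌋:ℚ) + 1 := Int.lt_floor_add_one u
  constructor
  · show 1 - 1/((kf l : ℚ)+1) ≤ l.1
    rw [hkq]
    have hA : (⌊u⌋:ℚ) * (1 - l.1) ≤ 1 := by
      rw [← le_div_iff₀ hpos]; exact hle
    have : 1 - l.1 ≤ 1/(⌊u⌋:ℚ) := by
      rw [le_div_iff₀ hn0]; nlinarith
    have heq : (⌊u⌋:ℚ) - 1 + 1 = (⌊u⌋:ℚ) := by ring
    rw [heq]; linarith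
  · have haux : aseq (kf l + 1) = 1 - 1/((kf l : ℚ)+1+1) := by
      unfold aseq; push_cast; ring_nf
    rw [haux]
    have hB : 1 < ((⌊u⌋:ℚ)+1) * (1 - l.1) := by
      rw [← div_lt_iff₀ hpos]; exact hlt
    have hn1 : (0:ℚ) < (⌊u⌋:ℚ)+1 := by linarith
    have : 1/((⌊u⌋:ℚ)+1) < 1 - l.1 := by
      rw [div_lt_iff₀ hn1]; nlinarith
    have heq : (kf l : ℚ)+1+1 = (⌊u⌋:ℚ)+1 := by rw [hkq]; ring
    rw [heq]; linarith

lemma kf_eq (k : ℕ) (l : Iq) (h1 : aseq k ≤ l.1) (h2 : l.1 < aseq (k+1)) : kf l = k := by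
  obtain ⟨hA, hB⟩ := kf_spec l
  rcases lt_trichotomy (kf l) k with h | h | h
  · have : aseq (kf l + 1) ≤ aseq k := aseq_strictMono.monotone (by omega)
    linarith
  · exact h
  · have : aseq (k+1) ≤ aseq (kf l) := aseq_strictMono.monotone (by omega)
    linarith

lemma exists_aseq_gt (l : Iq) : ∃ n : ℕ, l.1 < aseq (n+1) := by
  obtain ⟨h0, h1⟩ := l.2
  have hpos : 0 < 1 - l.1 := by linarith
  obtain ⟨n, hn⟩ := exists_nat_gt (1/(1 - l.1))
  refine ⟨n, ?_⟩
  have haux : aseq (n+1) = 1 - 1/((n:ℚ)+2) := by unfold aseq; push_cast; ring_nf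
  rw [haux]
  have h2 : 1/((n:ℚ)+2) < 1 - l.1 := by
    have hu : 0 < 1/(1-l.1) := by positivity
    have h4 := one_div_lt_one_div_of_lt hu (by linarith : 1/(1-l.1) < (n:ℚ)+2)
    rwa [one_div_one_div] at h4
  linarith

/-- Scaling of an index by a constant in `(0,1)`. -/
def scale (c : ℚ) (hc0 : 0 < c) (hc1 : c < 1) (l : Iq) : Iq :=
  ⟨c * l.1, mul_pos hc0 l.2.1, by nlinarith [l.2.1, l.2.2]⟩

/-- The reparametrization used to build the diagonal path: affine map of the interval
`[aseq (kf l), aseq (kf l + 1))` onto `[σL (kf l), σR (kf l))`. -/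
def psiVal (σL σR : ℕ → ℚ) (l : Iq) : ℚ :=
  σL (kf l) + (l.1 - aseq (kf l)) / (aseq (kf l + 1) - aseq (kf l)) * (σR (kf l) - σL (kf l))

lemma psiVal_bounds (σL σR : ℕ → ℚ) (hσ : ∀ k, σL k < σR k) (l : Iq) :
    σL (kf l) ≤ psiVal σL σR l ∧ psiVal σL σR l < σR (kf l) := by
  obtain ⟨hA, hB⟩ := kf_spec l
  have hAB : aseq (kf l) < aseq (kf l + 1) := aseq_strictMono (by omega)
  set r : ℚ := (l.1 - aseq (kf l)) / (aseq (kf l + 1) - aseq (kf l)) with hr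
  have hr0 : 0 ≤ r := div_nonneg (by linarith) (by linarith)
  have hr1 : r < 1 := (div_lt_one (by linarith)).mpr (by linarith)
  have hσk := hσ (kf l)
  unfold psiVal
  rw [← hr]
  constructor
  · nlinarith
  · nlinarith

lemma psiVal_mono (σL σR : ℕ → ℚ) (hσ : ∀ k, σL k < σR k) (l m : Iq)
    (hk : kf l = kf m) (hlm : l.1 < m.1) : psiVal σL σR l < psiVal σL σR m := by
  obtain ⟨hA, hB⟩ := kf_spec l
  have hAB : aseq (kf l) < aseq (kf l + 1) := aseq_strictMono (by omega)
  have hσk := hσ (kf l)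
  unfold psiVal
  rw [← hk]
  have key : ∀ x : ℚ, σL (kf l) + (x - aseq (kf l)) / (aseq (kf l + 1) - aseq (kf l)) *
      (σR (kf l) - σL (kf l)) = σL (kf l) + (x - aseq (kf l)) *
      ((σR (kf l) - σL (kf l)) / (aseq (kf l + 1) - aseq (kf l))) := by
    intro x; ring
  rw [key, key]
  have hpos : 0 < (σR (kf l) - σL (kf l)) / (aseq (kf l + 1) - aseq (kf l)) := by
    apply div_pos <;> linarith
  nlinarith

lemma psiVal_left (σL σR : ℕ → ℚ) (k : ℕ) (l : Iq) (hl : l.1 = aseq (k+1))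
    (hkl : kf l = k+1) : psiVal σL σR l = σL (k+1) := by
  unfold psiVal
  rw [hkl, hl]
  simp

/-- The reparametrization as a map into `Iq`. -/
def psi (σL σR : ℕ → ℚ) (h0 : ∀ k, 0 < σL k) (h1 : ∀ k, σR k < 1) (hσ : ∀ k, σL k < σR k)
    (l : Iq) : Iq :=
  ⟨psiVal σL σR l, lt_of_lt_of_le (h0 _) (psiVal_bounds _ _ hσ l).1,
    lt_trans (psiVal_bounds _ _ hσ l).2 (h1 _)⟩

end Stmt15Aux

namespace Stmt15Aux

open PSgp

variable {M : Type*} [AddCommMonoid M] {P : PSgp M}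

/-- The constant path at an element `φ` with `φ ≺ φ`. -/
def cst (P : PSgp M) (φ : M) (hφ : P.prec φ φ) : P.Path := ⟨fun _ => φ, fun _ _ _ => hφ⟩

lemma iq_half : (0:ℚ) < 1/2 ∧ (1:ℚ)/2 < 1 := by norm_num

/-- The class of a constant path is a compact element of `τ(P)`. -/
lemma cst_compact (φ : M) (hφ : P.prec φ φ) :
    CuWayBelow (⟦cst P φ hφ⟧ : Tau P) ⟦cst P φ hφ⟧ := by
  intro z hz s hs hles
  set h : ℕ → P.Path := fun n => (z n).out with hh
  have hout : ∀ n, (⟦h n⟧ : Tau P) = z n := fun n => Quotient.out_eq _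
  have hle : ∀ n, pLe (h n) (h (n+1)) := by
    intro n
    have h2 := hz (Nat.le_succ n)
    rw [← hout n, ← hout (n+1)] at h2
    exact h2
  have climb : ∀ n (l : Iq) k, n ≤ k → ∃ t : Iq, P.prec ((h n).1 l) ((h k).1 t) := by
    intro n l k hk
    induction k, hk using Nat.le_induction with
    | base =>
      obtain ⟨m, hm⟩ := Iq.exists_gt l
      exact ⟨m, (h n).2 hm⟩
    | succ k hk ih =>
      obtain ⟨t, ht⟩ := ih
      obtain ⟨t', ht'⟩ := hle k t
      exact ⟨t', P.trans ht ht'⟩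
  have hstepex : ∀ (N n : ℕ) (σ' l : Iq), ∃ (N' : ℕ) (σ σ2 : Iq), σ.1 < σ2.1 ∧
      P.prec ((h N).1 σ') ((h N').1 σ) ∧ P.prec ((h n).1 l) ((h N').1 σ) := by
    intro N n σ' l
    obtain ⟨a, ha⟩ := climb N σ' (max N n) (le_max_left _ _)
    obtain ⟨b, hb⟩ := climb n l (max N n) (le_max_right _ _)
    obtain ⟨σ, hσ⟩ := Iq.exists_gt
      ⟨max a.1 b.1, lt_max_of_lt_left a.2.1, max_lt a.2.2 b.2.2⟩
    obtain ⟨σ2, hσ2⟩ := Iq.exists_gt σ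
    exact ⟨max N n, σ, σ2, hσ2,
      P.trans ha ((h _).2 (lt_of_le_of_lt (le_max_left _ _) hσ)),
      P.trans hb ((h _).2 (lt_of_le_of_lt (le_max_right _ _) hσ))⟩
  choose N' σf σ2f hσlt hst1 hst2 using hstepex
  have hne : Nonempty (ℕ × Iq) := ⟨0, ⟨1/2, iq_half⟩⟩
  obtain ⟨e, he⟩ := exists_surjective_nat (ℕ × Iq)
  obtain ⟨q, hq1, hq2, hq3⟩ : ∃ q : ℕ → ℕ × Iq × Iq,
      (∀ k, (q k).2.1.1 < (q k).2.2.1) ∧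
      (∀ k, P.prec ((h (q k).1).1 (q k).2.2) ((h (q (k+1)).1).1 (q (k+1)).2.1)) ∧
      (∀ k, P.prec ((h (e k).1).1 (e k).2) ((h (q (k+1)).1).1 (q (k+1)).2.1)) := by
    refine ⟨fun k => Nat.rec (⟨0, ⟨1/4, by norm_num⟩, ⟨1/2, by norm_num⟩⟩ : ℕ × Iq × Iq)
      (fun k ih => ⟨N' ih.1 (e k).1 ih.2.2 (e k).2, σf ih.1 (e k).1 ih.2.2 (e k).2,
        σ2f ih.1 (e k).1 ih.2.2 (e k).2⟩) k, fun k => ?_,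
      fun k => hst1 _ _ _ _, fun k => hst2 _ _ _ _⟩
    cases k with
    | zero => norm_num
    | succ k => exact hσlt _ _ _ _
  set σL : ℕ → ℚ := fun k => (q k).2.1.1 with hσL
  set σR : ℕ → ℚ := fun k => (q k).2.2.1 with hσR
  have h0 : ∀ k, 0 < σL k := fun k => (q k).2.1.2.1
  have h1 : ∀ k, σR k < 1 := fun k => (q k).2.2.2.2
  have hσ : ∀ k, σL k < σR k := hq1
  -- the chain lemma
  have chain : ∀ j k, j < k →
      P.prec ((h (q j).1).1 (q j).2.2) ((h (q k).1).1 (q k).2.1) := by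
    intro j k hjk
    induction k, hjk using Nat.le_induction with
    | base => exact hq2 j
    | succ k hk ih =>
      exact P.trans ih (P.trans ((h (q k).1).2 (hq1 k)) (hq2 k))
  -- the diagonal path
  have dpath : P.IsPath (fun l => (h (q (kf l)).1).1 (psi σL σR h0 h1 hσ l)) := by
    intro l m hlm
    show P.prec ((h (q (kf l)).1).1 (psi σL σR h0 h1 hσ l))
      ((h (q (kf m)).1).1 (psi σL σR h0 h1 hσ m))
    have hk : kf l ≤ kf m := by
      by_contra hlt
      push_neg at hlt
      have h3 : aseq (kf m + 1) ≤ aseq (kf l) := aseq_strictMono.monotone (by omega)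
      have h4 := (kf_spec l).1
      have h5 := (kf_spec m).2
      linarith
    rcases eq_or_lt_of_le hk with heq | hlt
    · rw [← heq]
      exact (h (q (kf l)).1).2
        (show (psi σL σR h0 h1 hσ l).1 < (psi σL σR h0 h1 hσ m).1 from
          psiVal_mono σL σR hσ l m heq hlm)
    · have hp1 : P.prec ((h (q (kf l)).1).1 (psi σL σR h0 h1 hσ l))
          ((h (q (kf l)).1).1 (q (kf l)).2.2) :=
        (h _).2 ((psiVal_bounds σL σR hσ l).2)
      have hp2 := chain (kf l) (kf m) hlt
      rcases eq_or_lt_of_le (psiVal_bounds σL σR hσ m).1 with heq2 | hlt2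
      · have heq3 : (q (kf m)).2.1 = psi σL σR h0 h1 hσ m := Subtype.ext heq2
        rw [← heq3]
        exact P.trans hp1 hp2
      · exact P.trans hp1 (P.trans hp2 ((h _).2 hlt2))
  set d : P.Path := ⟨fun l => (h (q (kf l)).1).1 (psi σL σR h0 h1 hσ l), dpath⟩ with hd
  have hub : (⟦d⟧ : Tau P) ∈ upperBounds (Set.range z) := by
    rintro _ ⟨n, rfl⟩
    rw [← hout n]
    show pLe (h n) d
    intro l
    obtain ⟨k, hek⟩ := he (n, l)
    have hmem : 0 < aseq (k+1) ∧ aseq (k+1) < 1 := ⟨aseq_succ_pos k, aseq_lt_one _⟩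
    set m0 : Iq := ⟨aseq (k+1), hmem⟩ with hm0
    have hkm0 : kf m0 = k+1 := kf_eq (k+1) m0 le_rfl (aseq_strictMono (Nat.lt_succ_self (k+1)))
    have hψm0 : psi σL σR h0 h1 hσ m0 = (q (k+1)).2.1 := by
      apply Subtype.ext
      show psiVal σL σR m0 = σL (k+1)
      exact psiVal_left σL σR k m0 rfl hkm0
    refine ⟨m0, ?_⟩
    show P.prec ((h n).1 l) ((h (q (kf m0)).1).1 (psi σL σR h0 h1 hσ m0))
    rw [hkm0, hψm0]
    have h6 := hq3 k
    rw [hek] at h6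
    exact h6
  have hsd : s ≤ ⟦d⟧ := hs.2 hub
  have hcd : pLe (cst P φ hφ) d := le_trans hles hsd
  obtain ⟨m, hm⟩ := hcd ⟨1/2, iq_half⟩
  refine ⟨(q (kf m)).1, ?_⟩
  rw [← hout ((q (kf m)).1)]
  show pLe (cst P φ hφ) (h (q (kf m)).1)
  intro l
  exact ⟨psi σL σR h0 h1 hσ m, hm⟩

/-- Every compact element of `τ(P)` is the class of a constant path. -/
lemma compact_exists_cst (x : Tau P) (hx : CuWayBelow x x) :
    ∃ (φ : M) (hφ : P.prec φ φ), (⟦cst P φ hφ⟧ : Tau P) = x := by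
  obtain ⟨f, hfx⟩ : ∃ f : P.Path, (⟦f⟧ : Tau P) = x := ⟨x.out, Quotient.out_eq x⟩
  have hg : ∀ n : ℕ, P.IsPath
      (fun l => f.1 (scale (aseq (n+1)) (aseq_succ_pos n) (aseq_lt_one _) l)) := by
    intro n l m hlm
    refine f.2 (show aseq (n+1) * l.1 < aseq (n+1) * m.1 from ?_)
    have := aseq_succ_pos n
    nlinarith
  set g : ℕ → P.Path := fun n => ⟨_, hg n⟩ with hgdef
  set z : ℕ → Tau P := fun n => ⟦g n⟧ with hzdef
  have hzmono : Monotone z := by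
    apply monotone_nat_of_le_succ
    intro n
    show pLe (g n) (g (n+1))
    intro l
    refine ⟨l, f.2 ?_⟩
    show aseq (n+1) * l.1 < aseq (n+1+1) * l.1
    have h1 := aseq_strictMono (Nat.lt_succ_self (n+1))
    have h2 := l.2.1
    nlinarith
  have hlub : IsLUB (Set.range z) ⟦f⟧ := by
    constructor
    · rintro _ ⟨n, rfl⟩
      show pLe (g n) f
      intro l
      refine ⟨l, f.2 ?_⟩
      show aseq (n+1) * l.1 < l.1
      have h1 := aseq_lt_one (n+1)
      have h2 := aseq_succ_pos n
      have h3 := l.2.1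
      nlinarith
    · intro b hb
      induction b using Quotient.inductionOn with
      | h hh =>
        show pLe f hh
        intro l
        obtain ⟨n, hn⟩ := exists_aseq_gt l
        have hc0 := aseq_succ_pos n
        have hdiv : l.1 / aseq (n+1) < 1 := (div_lt_one hc0).mpr hn
        have hdiv0 : 0 < l.1 / aseq (n+1) := div_pos l.2.1 hc0
        set l' : Iq := ⟨(l.1 / aseq (n+1) + 1)/2, by constructor <;> linarith⟩ with hl'
        have h7 : l.1 / aseq (n+1) < l'.1 := by show _ < (l.1 / aseq (n+1) + 1)/2; linarith
        have h8 : l.1 < aseq (n+1) * l'.1 := by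
          have := (div_lt_iff₀ hc0).mp h7
          linarith [this, mul_comm l'.1 (aseq (n+1))]
        have h9 : pLe (g n) hh := hb ⟨n, rfl⟩
        obtain ⟨m, hm⟩ := h9 l'
        exact ⟨m, P.trans (f.2 h8) hm⟩
  obtain ⟨k, hk⟩ := hx z hzmono ⟦f⟧ hlub hfx.ge
  rw [← hfx] at hk
  have hk' : pLe f (g k) := hk
  set c : Iq := ⟨aseq (k+1), aseq_succ_pos k, aseq_lt_one _⟩ with hc
  have hall : ∀ l : Iq, P.prec (f.1 l) (f.1 c) := by
    intro l
    obtain ⟨m, hm⟩ := hk' l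
    refine P.trans hm (f.2 ?_)
    show aseq (k+1) * m.1 < aseq (k+1)
    have h1 := aseq_succ_pos k
    have h2 := m.2.2
    have h3 := m.2.1
    nlinarith
  refine ⟨f.1 c, hall c, ?_⟩
  rw [← hfx]
  apply Quotient.sound
  exact ⟨fun l => ⟨c, hall c⟩, fun l => ⟨c, hall l⟩⟩

end Stmt15Aux


lemma cuWayBelow_le {α : Type*} [PartialOrder α] {x y : α} (h : CuWayBelow x y) : x ≤ y := by
  obtain ⟨k, hk⟩ := h (fun _ => y) monotone_const y
    (by rw [Set.range_const]; exact isLUB_singleton) le_rfl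
  exact hk

lemma precCu_le [IsCuSgp S] {φ ψ : GenCuMor S T} (h : precCu φ ψ) (a : S) :
    φ.1 a ≤ ψ.1 a := by
  obtain ⟨z, hz, hlub⟩ := IsCuSgp.O2 a
  have hmono : Monotone z := monotone_nat_of_le_succ fun n => cuWayBelow_le (hz n)
  have hφ := φ.2.2.2.2 z hmono a hlub
  refine hφ.2 ?_
  rintro _ ⟨n, rfl⟩
  show φ.1 (z n) ≤ ψ.1 a
  calc φ.1 (z n) ≤ ψ.1 (z (n+1)) := cuWayBelow_le (h _ _ (hz n))
    _ ≤ ψ.1 a := ψ.2.2.2.1 (hlub.1 ⟨n+1, rfl⟩)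

/-- Cu-morphisms `S → T` correspond naturally to compact elements of the bivariant
Cu-semigroup `[[S,T]] = τ([S,T], ≺)`: every Cu-morphism gives a constant path whose
class is compact, and every compact element arises this way. -/
theorem stmt15 [IsCuSgp S] [IsCuSgp T]
    (P : PSgp (GenCuMor S T)) (hP : ∀ φ ψ : GenCuMor S T, P.prec φ ψ ↔ precCu φ ψ) :
    (∀ φc : {φ : GenCuMor S T // ∀ ⦃a' a : S⦄, CuWayBelow a' a →
        CuWayBelow (φ.1 a') (φ.1 a)}, P.IsPath fun _ : Iq => φc.1) ∧
    ∃ e : {φ : GenCuMor S T // ∀ ⦃a' a : S⦄, CuWayBelow a' a →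
        CuWayBelow (φ.1 a') (φ.1 a)} ≃ {x : PSgp.Tau P // CuWayBelow x x},
      ∀ (φc : {φ : GenCuMor S T // ∀ ⦃a' a : S⦄, CuWayBelow a' a →
          CuWayBelow (φ.1 a') (φ.1 a)}) (f : P.Path),
        (∀ l : Iq, f.1 l = φc.1) → (e φc).1 = ⟦f⟧ := by
  have hself : ∀ φc : {φ : GenCuMor S T // ∀ ⦃a' a : S⦄, CuWayBelow a' a →
      CuWayBelow (φ.1 a') (φ.1 a)}, P.prec φc.1 φc.1 :=
    fun φc => (hP _ _).2 (fun a' a h => φc.2 h)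
  refine ⟨fun φc l m _ => hself φc, ?_⟩
  set F : {φ : GenCuMor S T // ∀ ⦃a' a : S⦄, CuWayBelow a' a →
      CuWayBelow (φ.1 a') (φ.1 a)} → {x : PSgp.Tau P // CuWayBelow x x} :=
    fun φc => ⟨⟦Stmt15Aux.cst P φc.1 (hself φc)⟧, Stmt15Aux.cst_compact _ _⟩ with hF
  have hinj : Function.Injective F := by
    intro φc ψc hFeq
    have h1 := Quotient.exact (Subtype.ext_iff.mp hFeq)
    have h2 : P.prec φc.1 ψc.1 := by
      obtain ⟨m, hm⟩ := h1.1 ⟨1/2, Stmt15Aux.iq_half⟩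
      exact hm
    have h3 : P.prec ψc.1 φc.1 := by
      obtain ⟨m, hm⟩ := h1.2 ⟨1/2, Stmt15Aux.iq_half⟩
      exact hm
    apply Subtype.ext; apply Subtype.ext; funext a
    exact le_antisymm (precCu_le ((hP _ _).mp h2) a) (precCu_le ((hP _ _).mp h3) a)
  have hsurj : Function.Surjective F := by
    intro x
    obtain ⟨φ, hφ, hfx⟩ := Stmt15Aux.compact_exists_cst x.1 x.2
    refine ⟨⟨φ, by intro a' a h; exact (hP _ _).mp hφ a' a h⟩, Subtype.ext ?_⟩
    exact hfx
  refine ⟨Equiv.ofBijective F ⟨hinj, hsurj⟩, ?_⟩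
  intro φc f hf
  show (F φc).1 = ⟦f⟧
  have hfc : f = Stmt15Aux.cst P φc.1 (hself φc) := Subtype.ext (funext hf)
  rw [hfc]
end

section
/- Let S be a Cu-semigroup. Then the map ev₁ : [ℕ∪{∞}, S] → S, sending a generalized Cu-morphism f to f(1), is an isomorphism of Q-semigroups: it is an additive order-isomorphism, and f ≺ g in [ℕ∪{∞}, S] if and only if f(1) ≪ g(1) in S. -/
variable {S T : Type*} [AddCommMonoid S] [PartialOrder S] [AddCommMonoid T] [PartialOrder T]

section Helpers

variable {R : Type*} [AddCommMonoid R] [PartialOrder R] [IsCuSgp R]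

lemma cu_le_add_right (a b : R) : a ≤ a + b := by
  simpa using IsCuSgp.add_mono (le_refl a) (IsCuSgp.zero_le b)

lemma cu_nsmul_mono (s : R) : Monotone fun n : ℕ => n • s := by
  intro m n h
  show m • s ≤ n • s
  have : n • s = m • s + (n - m) • s := by rw [← add_nsmul, Nat.add_sub_cancel' h]
  rw [this]; exact cu_le_add_right _ _

lemma cu_nsmul_le_nsmul (n : ℕ) {a b : R} (h : a ≤ b) : n • a ≤ n • b := by
  induction n with
  | zero => simp
  | succ k ih => rw [succ_nsmul, succ_nsmul]; exact IsCuSgp.add_mono ih h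

lemma cu_isLUB_const {R : Type*} [Preorder R] (x : R) :
    IsLUB (Set.range fun _ : ℕ => x) x :=
  ⟨by rintro y ⟨n, rfl⟩; exact le_rfl, fun b hb => hb ⟨0, rfl⟩⟩

lemma cu_isLUB_shift {R : Type*} [Preorder R] {z : ℕ → R} (hz : Monotone z) {s : R}
    (h : IsLUB (Set.range z) s) (m : ℕ) : IsLUB (Set.range fun k => z (k + m)) s := by
  constructor
  · rintro y ⟨n, rfl⟩; exact h.1 ⟨n + m, rfl⟩
  · intro b hb
    refine h.2 ?_
    rintro y ⟨n, rfl⟩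
    exact (hz (Nat.le_add_right n m)).trans (hb ⟨n, rfl⟩)

noncomputable def cuSup (s : R) : R :=
  (IsCuSgp.O1 _ (cu_nsmul_mono s)).choose

lemma cuSup_isLUB (s : R) : IsLUB (Set.range fun n : ℕ => n • s) (cuSup s) :=
  (IsCuSgp.O1 _ (cu_nsmul_mono s)).choose_spec

lemma cuSup_add_nsmul (s : R) (n : ℕ) : cuSup s + n • s = cuSup s := by
  have h1 : IsLUB (Set.range fun k : ℕ => k • s + n • s) (cuSup s + n • s) :=
    IsCuSgp.O4 _ _ (cu_nsmul_mono s) monotone_const _ _ (cuSup_isLUB s) (cu_isLUB_const _)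
  have h2 : IsLUB (Set.range fun k : ℕ => (k + n) • s) (cuSup s) :=
    cu_isLUB_shift (cu_nsmul_mono s) (cuSup_isLUB s) n
  have : (fun k : ℕ => k • s + n • s) = fun k : ℕ => (k + n) • s := by
    funext k; rw [add_nsmul]
  rw [this] at h1
  exact h1.unique h2

lemma cuSup_add_cuSup (s : R) : cuSup s + cuSup s = cuSup s := by
  have h1 : IsLUB (Set.range fun k : ℕ => k • s + k • s) (cuSup s + cuSup s) :=
    IsCuSgp.O4 _ _ (cu_nsmul_mono s) (cu_nsmul_mono s) _ _ (cuSup_isLUB s) (cuSup_isLUB s)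
  have h2 : IsLUB (Set.range fun k : ℕ => k • s + k • s) (cuSup s) := by
    constructor
    · rintro y ⟨k, rfl⟩
      show k • s + k • s ≤ cuSup s
      rw [← add_nsmul]; exact (cuSup_isLUB s).1 ⟨k + k, rfl⟩
    · intro b hb
      refine (cuSup_isLUB s).2 ?_
      rintro y ⟨k, rfl⟩
      show k • s ≤ b
      refine (cu_nsmul_mono s (Nat.le_add_right k k)).trans ?_
      show (k + k) • s ≤ b
      rw [add_nsmul]; exact hb ⟨k, rfl⟩
  exact h1.unique h2

/-- The candidate inverse of evaluation at 1. -/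
noncomputable def evInv (s : R) : ℕ∞ → R :=
  fun a => a.recTopCoe (cuSup s) (fun n => n • s)

@[simp] lemma evInv_top (s : R) : evInv s ⊤ = cuSup s := rfl

@[simp] lemma evInv_coe (s : R) (n : ℕ) : evInv s (n : ℕ∞) = n • s := rfl

lemma evInv_one (s : R) : evInv s 1 = s := by
  rw [show (1 : ℕ∞) = ((1 : ℕ) : ℕ∞) from Nat.cast_one.symm, evInv_coe, one_nsmul]

lemma evInv_mono (s : R) : Monotone (evInv s) := by
  intro a b hab
  induction b using ENat.recTopCoe with
  | top =>
    induction a using ENat.recTopCoe with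
    | top => exact le_rfl
    | coe m => exact (cuSup_isLUB s).1 ⟨m, rfl⟩
  | coe n =>
    induction a using ENat.recTopCoe with
    | top => exact absurd (top_le_iff.1 hab) (ENat.coe_ne_top n)
    | coe m => exact cu_nsmul_mono s (Nat.cast_le.1 hab)

lemma isLUB_natCast_enat : IsLUB (Set.range fun n : ℕ => (n : ℕ∞)) ⊤ := by
  constructor
  · rintro y ⟨n, rfl⟩; exact le_top
  · intro b hb
    by_contra hbt
    obtain ⟨m, rfl⟩ : ∃ m : ℕ, b = m :=
      Option.ne_none_iff_exists'.mp (lt_top_iff_ne_top.1 (lt_of_not_ge hbt))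
    have := hb ⟨m + 1, rfl⟩
    exact absurd (Nat.cast_le.1 this) (by omega)

lemma enat_lub_cases {z : ℕ → ℕ∞} {t : ℕ∞} (ht : IsLUB (Set.range z) t) :
    (∃ k, z k = t) ∨ (t = ⊤ ∧ ∀ n : ℕ, ∃ k, (n : ℕ∞) ≤ z k) := by
  by_cases hex : ∃ k, z k = t
  · exact Or.inl hex
  push_neg at hex
  right
  have hub : ∀ n : ℕ, ∃ k, (n : ℕ∞) ≤ z k := by
    intro n
    by_contra hn
    push_neg at hn
    have hb : t ≤ (n : ℕ∞) := ht.2 (by rintro y ⟨k, rfl⟩; exact (hn k).le)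
    -- t is finite, say t = m
    obtain ⟨m, rfl⟩ : ∃ m : ℕ, t = m :=
      Option.ne_none_iff_exists'.mp (lt_top_iff_ne_top.1 (hb.trans_lt (ENat.coe_lt_top n)))
    -- every z k < m
    have hlt : ∀ k, z k < (m : ℕ∞) := fun k => lt_of_le_of_ne (ht.1 ⟨k, rfl⟩) (hex k)
    rcases Nat.eq_zero_or_pos m with hm | hm
    · subst hm
      exact absurd (hlt 0) (by simpa using (zero_le (z 0)).not_gt)
    · have hub' : ((m - 1 : ℕ) : ℕ∞) ∈ upperBounds (Set.range z) := by
        rintro y ⟨k, rfl⟩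
        obtain ⟨j, hj⟩ : ∃ j : ℕ, z k = j :=
          Option.ne_none_iff_exists'.mp (ne_top_of_lt (hlt k))
        rw [hj]
        have h2 : (j : ℕ∞) < (m : ℕ∞) := hj ▸ hlt k
        exact Nat.cast_le.2 (by have := Nat.cast_lt.1 h2; omega)
      have := Nat.cast_le.1 (ht.2 hub')
      omega
  refine ⟨?_, hub⟩
  refine top_le_iff.1 (isLUB_natCast_enat.2 ?_)
  rintro y ⟨n, rfl⟩
  obtain ⟨k, hk⟩ := hub n
  exact hk.trans (ht.1 ⟨k, rfl⟩)

lemma evInv_isGenCuMor (s : R) : IsGenCuMor (evInv s) := by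
  refine ⟨?_, ?_, evInv_mono s, ?_⟩
  · rw [show (0 : ℕ∞) = ((0 : ℕ) : ℕ∞) from Nat.cast_zero.symm, evInv_coe, zero_nsmul]
  · intro a b
    induction a using ENat.recTopCoe with
    | top =>
      induction b using ENat.recTopCoe with
      | top => rw [top_add]; exact (cuSup_add_cuSup s).symm
      | coe n => rw [top_add]; exact (cuSup_add_nsmul s n).symm
    | coe m =>
      induction b using ENat.recTopCoe with
      | top =>
        rw [add_top]
        exact ((add_comm (m • s) (cuSup s)).trans (cuSup_add_nsmul s m)).symm
      | coe n => rw [← Nat.cast_add]; exact add_nsmul s m n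
  · intro z hz t ht
    rcases enat_lub_cases ht with ⟨k, hk⟩ | ⟨rfl, hub⟩
    · constructor
      · rintro y ⟨n, rfl⟩
        exact evInv_mono s (ht.1 ⟨n, rfl⟩)
      · intro b hb
        rw [← hk]
        exact hb ⟨k, rfl⟩
    · constructor
      · rintro y ⟨n, rfl⟩
        exact evInv_mono s (le_top : z n ≤ ⊤)
      · intro b hb
        rw [evInv_top]
        refine (cuSup_isLUB s).2 ?_
        rintro y ⟨n, rfl⟩
        obtain ⟨k, hk⟩ := hub n
        have : evInv s (n : ℕ∞) ≤ evInv s (z k) := evInv_mono s hk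
        rw [evInv_coe] at this
        exact this.trans (hb ⟨k, rfl⟩)

lemma genCuMor_coe (f : GenCuMor ℕ∞ R) (n : ℕ) : f.1 (n : ℕ∞) = n • f.1 1 := by
  induction n with
  | zero => simpa using f.2.1
  | succ k ih =>
    have : ((k + 1 : ℕ) : ℕ∞) = (k : ℕ∞) + 1 := by push_cast; ring
    rw [this, f.2.2.1, ih, succ_nsmul]

lemma genCuMor_top (f : GenCuMor ℕ∞ R) :
    IsLUB (Set.range fun n : ℕ => n • f.1 1) (f.1 ⊤) := by
  have h := f.2.2.2.2 (fun n : ℕ => (n : ℕ∞)) (fun a b hab => Nat.cast_le.2 hab) ⊤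
    isLUB_natCast_enat
  have he : (f.1 ∘ fun n : ℕ => (n : ℕ∞)) = fun n : ℕ => n • f.1 1 := by
    funext n; exact genCuMor_coe f n
  rwa [he] at h

lemma cu_wb_mono {R : Type*} [Preorder R] {x' x y y' : R} (hx : x' ≤ x)
    (h : CuWayBelow x y) (hy : y ≤ y') : CuWayBelow x' y' := by
  intro z hz s hs hle
  obtain ⟨k, hk⟩ := h z hz s hs (hy.trans hle)
  exact ⟨k, hx.trans hk⟩

lemma cu_wb_zero : CuWayBelow (0 : R) 0 := fun z _ _ _ _ => ⟨0, IsCuSgp.zero_le _⟩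

lemma cu_wb_nsmul {a b : R} (h : CuWayBelow a b) (n : ℕ) :
    CuWayBelow (n • a) (n • b) := by
  induction n with
  | zero => simpa using cu_wb_zero
  | succ k ih => rw [succ_nsmul, succ_nsmul]; exact IsCuSgp.O3 ih h

lemma enat_one_wb_one : CuWayBelow (1 : ℕ∞) 1 := by
  intro z hz s hs hle
  by_contra hn
  push_neg at hn
  have h0 : ∀ k, z k = 0 := by
    intro k
    have h1 : z k < 1 := hn k
    obtain ⟨j, hj⟩ : ∃ j : ℕ, z k = j :=
      Option.ne_none_iff_exists'.mp (ne_top_of_lt h1)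
    rw [hj] at h1 ⊢
    have hj1 : j < 1 := by exact_mod_cast h1
    simp [Nat.lt_one_iff.1 hj1]
  have hs0 : s ≤ 0 := hs.2 (by rintro y ⟨k, rfl⟩; rw [h0 k])
  exact absurd (hle.trans hs0) (by simp)

end Helpers

/-- For a Cu-semigroup `S`, evaluation at `1` is an isomorphism of `Q`-semigroups from
the generalized Cu-morphisms `ℕ∪{∞} → S` onto `S`: it is additive, bijective, an order
embedding, and `f ≺ g` iff `f(1) ≪ g(1)`. -/
theorem stmt16 {S : Type*} [AddCommMonoid S] [PartialOrder S] [IsCuSgp S] :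
    (Function.Bijective fun f : GenCuMor ℕ∞ S => f.1 1) ∧
    (∀ f g : GenCuMor ℕ∞ S, (∀ a : ℕ∞, f.1 a ≤ g.1 a) ↔ f.1 1 ≤ g.1 1) ∧
    (∀ f g : GenCuMor ℕ∞ S, (f + g).1 1 = f.1 1 + g.1 1) ∧
    (∀ f g : GenCuMor ℕ∞ S, precCu f g ↔ CuWayBelow (f.1 1) (g.1 1)) := by
  refine ⟨⟨?_, ?_⟩, ?_, fun f g => rfl, ?_⟩
  · -- injective
    intro f g h
    replace h : f.1 1 = g.1 1 := h
    apply Subtype.ext; funext a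
    induction a using ENat.recTopCoe with
    | top =>
      have hg := genCuMor_top g
      rw [← h] at hg
      exact (genCuMor_top f).unique hg
    | coe n => rw [genCuMor_coe, genCuMor_coe, h]
  · -- surjective
    intro s
    exact ⟨⟨evInv s, evInv_isGenCuMor s⟩, evInv_one s⟩
  · -- order embedding
    intro f g
    refine ⟨fun h => h 1, fun h a => ?_⟩
    induction a using ENat.recTopCoe with
    | top =>
      refine (genCuMor_top f).2 ?_
      rintro y ⟨n, rfl⟩
      calc n • f.1 1 ≤ n • g.1 1 := cu_nsmul_le_nsmul n h
        _ = g.1 (n : ℕ∞) := (genCuMor_coe g n).symm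
        _ ≤ g.1 ⊤ := g.2.2.2.1 le_top
    | coe n =>
      rw [genCuMor_coe, genCuMor_coe]
      exact cu_nsmul_le_nsmul n h
  · -- precCu iff way-below
    intro f g
    constructor
    · intro h
      exact h 1 1 enat_one_wb_one
    · intro h a' a ha
      obtain ⟨k, hk⟩ := ha (fun n : ℕ => (n : ℕ∞)) (fun _ _ hab => Nat.cast_le.2 hab) ⊤
        isLUB_natCast_enat le_top
      obtain ⟨n, rfl⟩ : ∃ n : ℕ, a' = n :=
        Option.ne_none_iff_exists'.mp (hk.trans_lt (ENat.coe_lt_top k)).ne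
      have ha'a : (n : ℕ∞) ≤ a := by
        obtain ⟨_, hk'⟩ := ha (fun _ => a) monotone_const a (cu_isLUB_const a) le_rfl
        exact hk'
      refine cu_wb_mono (genCuMor_coe f n).le (cu_wb_nsmul h n) ?_
      rw [← genCuMor_coe]
      exact g.2.2.2.1 ha'a
end

section
/- Let R be a (not necessarily commutative) Cu-semiring with multiplication map μ : R ⊗ R → R. If μ is injective, then R is commutative. (Key step: since μ(1 ⊗ a) = a = μ(a ⊗ 1), injectivity gives 1 ⊗ a = a ⊗ 1 in R ⊗ R for all a, and applying the shuffle map x⊗y⊗z ↦ y⊗x⊗z to b⊗1⊗a = b⊗a⊗1 yields 1⊗b⊗a = a⊗b⊗1, whence ba = ab.) -/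
section

variable {S T : Type*} [AddCommMonoid S] [PartialOrder S] [AddCommMonoid T] [PartialOrder T]

/-- Cu-morphism: a generalized Cu-morphism that moreover preserves way-below. -/
def IsCuMor (φ : S → T) : Prop :=
  IsGenCuMor φ ∧ ∀ ⦃a b : S⦄, CuWayBelow a b → CuWayBelow (φ a) (φ b)

end

section

variable {S T R : Type*} [AddCommMonoid S] [PartialOrder S] [AddCommMonoid T]
  [PartialOrder T] [AddCommMonoid R] [PartialOrder R]

/-- Cu-bimorphism: a generalized Cu-morphism in each variable which moreover jointly
preserves suprema of increasing sequences and the joint way-below relation. -/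
def IsCuBimor (φ : S → T → R) : Prop :=
  (∀ a : S, IsGenCuMor (φ a)) ∧ (∀ b : T, IsGenCuMor fun a => φ a b) ∧
  (∀ z : ℕ → S, ∀ w : ℕ → T, Monotone z → Monotone w → ∀ s t, IsLUB (Set.range z) s →
    IsLUB (Set.range w) t → IsLUB (Set.range fun n => φ (z n) (w n)) (φ s t)) ∧
  (∀ ⦃a' a : S⦄ ⦃b' b : T⦄, CuWayBelow a' a → CuWayBelow b' b →
    CuWayBelow (φ a' b') (φ a b))

end

universe u

/-- Let `R` be a (not necessarily commutative) Cu-semiring, let `RR` together with the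
universal Cu-bimorphism `ω` be the tensor product `R ⊗ R` in the category `Cu`, and let
`μ : R ⊗ R → R` be the Cu-morphism induced by multiplication. If `μ` is injective,
then `R` is commutative. -/
theorem stmt18 {R RR : Type u} [AddCommMonoid R] [PartialOrder R] [AddCommMonoid RR]
    [PartialOrder RR] [IsCuSgp R] [IsCuSgp RR]
    (mul : R → R → R) (hmul : IsCuBimor mul)
    (hassoc : ∀ a b c : R, mul (mul a b) c = mul a (mul b c))
    (one : R) (hone : ∀ a : R, mul one a = a ∧ mul a one = a)
    (ω : R → R → RR) (hω : IsCuBimor ω)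
    (huniv : ∀ (P : Type u) [AddCommMonoid P] [PartialOrder P], IsCuSgp P →
      ∀ φ : R → R → P, IsCuBimor φ →
        ∃! ft : RR → P, IsCuMor ft ∧ ∀ a b : R, ft (ω a b) = φ a b)
    (μ : RR → R) (hμCu : IsCuMor μ) (hμω : ∀ a b : R, μ (ω a b) = mul a b)
    (hinj : Function.Injective μ) :
    ∀ a b : R, mul a b = mul b a := by
  intro a b
  -- μ(ω 1 x) = x = μ(ω x 1), so by injectivity ω 1 x = ω x 1.
  have key : ∀ x : R, ω one x = ω x one := fun x =>
    hinj (by rw [hμω, hμω, (hone x).1, (hone x).2])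
  -- associativity transfers along injectivity: ω a (b·1) = ω (a·b) 1
  have hassocω : ω a (mul b one) = ω (mul a b) one :=
    hinj (by rw [hμω, hμω, hassoc])
  have e1 : ω a b = ω (mul a b) one := by
    have := hassocω
    rwa [(hone b).2] at this
  -- the swap map σ on RR induced by the bimorphism (x, y) ↦ ω y x
  have hswap : IsCuBimor (fun x y : R => ω y x) := by
    obtain ⟨h1, h2, h3, h4⟩ := hω
    exact ⟨fun a => h2 a, fun b => h1 b,
      fun z w hz hw s t hs ht => h3 w z hw hz t s ht hs,
      fun a' a b' b ha hb => h4 hb ha⟩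
  obtain ⟨σ, ⟨hσCu, hσω⟩, -⟩ :=
    huniv RR ‹IsCuSgp RR› (fun x y : R => ω y x) hswap
  -- σ fixes ω a b, since ω a b = ω (a·b) 1 = ω 1 (a·b)
  have e3 : ω b a = ω a b := by
    have h := hσω a b
    rw [e1, hσω, key (mul a b), ← e1] at h
    exact h.symm
  have h := congrArg μ e3
  rw [hμω, hμω] at h
  exact h.symm
end
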